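/- For a positive integer k, let c(k) denote the number of integers M ≥ 2 such that the critical strip S_M^k exists, i.e. q_{M+1}·k + (M+2)·log 3 < q_M·k − (M+1)·log 3. Then there exists K such that for all integers k ≥ K one has √k/(3·log k) < c(k) < 2·√k/log k. -/

import Mathlib

open Real

/-- `q M = log(log M / log(M+1)) / log(M/(M+1))`, the slope of the `M`-th critical line. -/
noncomputable def q (M : ℕ) : ℝ :=
  Real.log (Real.log M / Real.log ((M : ℝ) + 1)) / Real.log ((M : ℝ) / ((M : ℝ) + 1))


lemma exp_lt_three : Real.exp 1 < 3 := by
  have := Real.exp_one_lt_d9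
  linarith [this]

lemma log3_ge_one : 1 ≤ Real.log 3 := by
  rw [Real.le_log_iff_exp_le (by norm_num)]
  exact exp_lt_three.le

lemma log3_le_two : Real.log 3 ≤ 2 := by
  rw [Real.log_le_iff_le_exp (by norm_num)]
  have h := Real.exp_one_gt_d9
  have : (2.7182818283:ℝ)^2 ≤ (Real.exp 1)^2 := by
    apply pow_le_pow_left₀ (by norm_num) h.le
  have h2 : Real.exp 2 = (Real.exp 1)^2 := by
    rw [← Real.exp_nat_mul]; norm_num
  nlinarith

lemma log_ge_one {M : ℕ} (h : 3 ≤ M) : 1 ≤ Real.log M := by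
  have : (3:ℝ) ≤ M := by exact_mod_cast h
  calc (1:ℝ) ≤ Real.log 3 := log3_ge_one
  _ ≤ Real.log M := Real.log_le_log (by norm_num) this

lemma log_ge_four {M : ℕ} (h : 100 ≤ M) : 4 ≤ Real.log M := by
  have hM : (100:ℝ) ≤ M := by exact_mod_cast h
  have h4 : Real.exp 4 ≤ 100 := by
    have h1 := Real.exp_one_lt_d9
    have h2 : Real.exp 4 = (Real.exp 1)^4 := by
      rw [← Real.exp_nat_mul]; norm_num
    have h3 : (Real.exp 1)^4 ≤ (2.7182818286:ℝ)^4 := by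
      apply pow_le_pow_left₀ (Real.exp_pos 1).le h1.le
    nlinarith
  rw [Real.le_log_iff_exp_le (by positivity)]
  linarith

/-- bounds on `a_M = log(M+1) - log M`. -/
lemma a_bounds {M : ℕ} (h : 1 ≤ M) :
    1/((M:ℝ)+1) ≤ Real.log ((M:ℝ)+1) - Real.log M ∧
    Real.log ((M:ℝ)+1) - Real.log M ≤ 1/(M:ℝ) := by
  have hM : (1:ℝ) ≤ M := by exact_mod_cast h
  have hM0 : (0:ℝ) < M := by linarith
  have hd : Real.log ((M:ℝ)+1) - Real.log M = Real.log (((M:ℝ)+1)/M) := by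
    rw [Real.log_div (by linarith) (by linarith)]
  have hd2 : Real.log M - Real.log ((M:ℝ)+1) = Real.log ((M:ℝ)/((M:ℝ)+1)) := by
    rw [Real.log_div (by linarith) (by linarith)]
  constructor
  · have := Real.log_le_sub_one_of_pos (show (0:ℝ) < (M:ℝ)/((M:ℝ)+1) by positivity)
    rw [← hd2] at this
    have : Real.log ((M:ℝ)+1) - Real.log M ≥ 1 - (M:ℝ)/((M:ℝ)+1) := by linarith
    have he : 1 - (M:ℝ)/((M:ℝ)+1) = 1/((M:ℝ)+1) := by field_simp; ring
    linarith [he ▸ this]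
  · have := Real.log_le_sub_one_of_pos (show (0:ℝ) < ((M:ℝ)+1)/M by positivity)
    rw [← hd] at this
    have he : ((M:ℝ)+1)/M - 1 = 1/(M:ℝ) := by field_simp; ring
    linarith

/-- Taylor sandwich for `q M`: with `L = log M`, `a = log(M+1) - log M`,
`|q M - (1/L - a/(2L²))| ≤ 2a²/L³`, for `M ≥ 100`. -/
lemma q_sandwich {M : ℕ} (h : 100 ≤ M) :
    |q M - (1/Real.log M -
      (Real.log ((M:ℝ)+1) - Real.log M)/(2*(Real.log M)^2))|
      ≤ 2*(Real.log ((M:ℝ)+1) - Real.log M)^2/(Real.log M)^3 := by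
  set L := Real.log M with hLdef
  set L' := Real.log ((M:ℝ)+1) with hL'def
  have hM3 : 3 ≤ M := by omega
  have hM1 : 1 ≤ M := by omega
  have hMr : (100:ℝ) ≤ M := by exact_mod_cast h
  have hL : 4 ≤ L := log_ge_four h
  have hL0 : 0 < L := by linarith
  have ha := a_bounds hM1
  set a := L' - L with hadef
  have ha1 : 1/((M:ℝ)+1) ≤ a := ha.1
  have ha2 : a ≤ 1/(M:ℝ) := ha.2
  have ha0 : 0 < a := lt_of_lt_of_le (by positivity) ha1
  have haS : a ≤ 1/100 := le_trans ha2 (by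
    rw [div_le_div_iff₀ (by linarith) (by norm_num)]; linarith)
  have hL'0 : 0 < L' := by simp only [hadef] at ha0; linarith
  set u := a / L with hudef
  have hu0 : 0 < u := by positivity
  have huS : u ≤ 1/100 := by
    rw [hudef, div_le_iff₀ hL0]
    calc a ≤ 1/100 := haS
    _ ≤ 1/100 * L := by nlinarith
  -- rewrite q M = log (1+u) / a
  have hq : q M = Real.log (1 + u) / a := by
    have h1 : Real.log (L / L') = Real.log L - Real.log L' := Real.log_div (by positivity) (by positivity)
    have h2 : Real.log ((M:ℝ)/((M:ℝ)+1)) = L - L' := Real.log_div (by positivity) (by positivity)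
    have h3 : (1 : ℝ) + u = L' / L := by
      rw [hudef, hadef]; field_simp; ring
    have h4 : Real.log (L'/L) = Real.log L' - Real.log L := Real.log_div (by positivity) (by positivity)
    rw [q, h1, h2, h3, h4, hadef]
    rw [div_eq_div_iff (by linarith) (by linarith)]
    ring
  -- Taylor estimate
  have hx : |(-u)| < 1 := by rw [abs_neg, abs_of_pos hu0]; linarith
  have ht := Real.abs_log_sub_add_sum_range_le hx 2
  have hsum : (∑ i ∈ Finset.range 2, (-u) ^ (i + 1) / (i + 1)) = -u + u^2/2 := by
    simp [Finset.sum_range_succ]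
    ring
  rw [hsum] at ht
  have habs : |(-u)| = u := by rw [abs_neg, abs_of_pos hu0]
  rw [habs] at ht
  have hlog1u : |Real.log (1 + u) - u + u^2/2| ≤ 2*u^3 := by
    have h1u : (1:ℝ) - -u = 1 + u := by ring
    rw [h1u] at ht
    have hd : u^3/(1-u) ≤ 2*u^3 := by
      rw [div_le_iff₀ (by linarith)]
      nlinarith [mul_pos (mul_pos hu0 hu0) hu0]
    calc |Real.log (1 + u) - u + u^2/2| = |(-u + u^2/2) + Real.log (1+u)| := by
          congr 1; ring
    _ ≤ u^3/(1-u) := ht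
    _ ≤ 2*u^3 := hd
  -- transfer to q
  have key : q M - (1/L - a/(2*L^2)) = (Real.log (1+u) - u + u^2/2) / a := by
    rw [hq, hudef]
    field_simp
    ring
  rw [key, abs_div, abs_of_pos ha0]
  rw [div_le_div_iff₀ ha0 (by positivity)]
  have h3 : u^3 * L^3 = a^3 := by rw [hudef]; field_simp
  calc |Real.log (1+u) - u + u^2/2| * L^3 ≤ 2*u^3 * L^3 := by
        apply mul_le_mul_of_nonneg_right hlog1u (by positivity)
  _ = 2*(u^3*L^3) := by ring
  _ = 2*a^3 := by rw [h3]
  _ = 2*a^2*a := by ring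

lemma q_near {M : ℕ} (h : 100 ≤ M) :
    1/Real.log M - (Real.log ((M:ℝ)+1) - Real.log M)/(2*(Real.log M)^2)
      - 2*(Real.log ((M:ℝ)+1) - Real.log M)^2/(Real.log M)^3 ≤ q M ∧
    q M ≤ 1/Real.log M - (Real.log ((M:ℝ)+1) - Real.log M)/(2*(Real.log M)^2)
      + 2*(Real.log ((M:ℝ)+1) - Real.log M)^2/(Real.log M)^3 := by
  have := abs_le.mp (q_sandwich h)
  constructor <;> linarith [this.1, this.2]

set_option maxHeartbeats 1000000 in
lemma deltaq_lower_abs (m L L' L'' Q Q' : ℝ)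
    (hm : 100 ≤ m)
    (hL : 4 ≤ L) (hLle : L ≤ L') (hL'le : L' ≤ L'')
    (ha1 : 1/(m+1) ≤ L' - L) (ha2 : L' - L ≤ 1/m)
    (ha'1 : 1/(m+2) ≤ L'' - L') (ha'2 : L'' - L' ≤ 1/(m+1))
    (hQ : 1/L - (L'-L)/(2*L^2) - 2*(L'-L)^2/L^3 ≤ Q)
    (hQ' : Q' ≤ 1/L' - (L''-L')/(2*L'^2) + 2*(L''-L')^2/L'^3) :
    1/(2*(m+1)*L'^2) ≤ Q - Q' := by
  set a := L' - L with hadef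
  set a' := L'' - L' with ha'def
  have hL0 : (0:ℝ) < L := by linarith
  have hL'0 : (0:ℝ) < L' := by linarith
  have hm0 : (0:ℝ) < m := by linarith
  have hmne : m ≠ 0 := ne_of_gt hm0
  have hLne : L ≠ 0 := ne_of_gt hL0
  have hL'ne : L' ≠ 0 := ne_of_gt hL'0
  have hm1ne : m + 1 ≠ 0 := by positivity
  have ha0 : 0 < a := lt_of_lt_of_le (by positivity) ha1
  have ha'0 : 0 < a' := lt_of_lt_of_le (by positivity) ha'1
  have ha2' : a ≤ 1/100 := le_trans ha2 (by
    rw [div_le_div_iff₀ hm0 (by norm_num)]; linarith)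
  have ha'2' : a' ≤ 1/m := le_trans ha'2 (by
    rw [div_le_div_iff₀ (by linarith) hm0]; nlinarith)
  -- main term
  have t1 : 1/L - 1/L' = a/(L*L') := by
    rw [hadef]; field_simp
  have t2 : 1/((m+1)*L'^2) ≤ a/(L*L') := by
    have hamul : 1 ≤ a*(m+1) := by
      rw [div_le_iff₀ (show (0:ℝ) < m+1 by linarith)] at ha1
      linarith
    rw [div_le_div_iff₀ (by positivity) (by positivity)]
    calc 1*(L*L') ≤ 1*(L'*L') := by nlinarith [mul_le_mul_of_nonneg_right hLle hL'0.le]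
    _ ≤ (a*(m+1))*(L'*L') := by
        nlinarith [mul_le_mul_of_nonneg_right hamul (mul_nonneg hL'0.le hL'0.le)]
    _ = a*((m+1)*L'^2) := by ring
  -- error bounds, all with atom 1/(m^2*L^2)
  have e1 : a/(2*L^2) - a'/(2*L'^2) ≤ 2*(1/(m^2*L^2)) := by
    have hd1 : a - a' ≤ 2/m^2 := by
      have h1 : 1/m - 1/(m+2) ≤ 2/m^2 := by
        rw [div_sub_div _ _ (by linarith) (by linarith), div_le_div_iff₀ (by nlinarith) (by nlinarith)]
        nlinarith
      linarith
    have hb1 : (a-a')/(2*L^2) ≤ 1/(m^2*L^2) := by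
      calc (a-a')/(2*L^2) ≤ (2/m^2)/(2*L^2) := by gcongr
      _ = 1/(m^2*L^2) := by field_simp <;> ring
    have hd2 : 1/(2*L^2) - 1/(2*L'^2) ≤ a/(L^2*L') := by
      have key : 1/(2*L^2) - 1/(2*L'^2) = a*(L+L')/(2*L^2*L'^2) := by
        rw [hadef]; field_simp; ring
      rw [key, div_le_div_iff₀ (by positivity) (by positivity)]
      have h2L : L + L' ≤ 2*L' := by linarith
      calc a*(L+L')*(L^2*L') ≤ a*(2*L')*(L^2*L') := by
            gcongr
      _ = a*(2*L^2*L'^2) := by ring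
      _ ≤ a*(2*L^2*L'^2) := le_refl _
    have hb2 : a'*(1/(2*L^2) - 1/(2*L'^2)) ≤ 1/(m^2*L^2) := by
      have s1 : a'*(1/(2*L^2) - 1/(2*L'^2)) ≤ a'*(a/(L^2*L')) := by
        apply mul_le_mul_of_nonneg_left hd2 ha'0.le
      have s2 : a'*(a/(L^2*L')) ≤ (1/m)*((1/m)/(L^2*L')) := by
        apply mul_le_mul ha'2' _ (by positivity) (by positivity)
        gcongr
      have s3 : (1/m)*((1/m)/(L^2*L')) = 1/(m^2*(L^2*L')) := by
        field_simp
      have s4 : 1/(m^2*(L^2*L')) ≤ 1/(m^2*L^2) := by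
        apply one_div_le_one_div_of_le (by positivity)
        have h1L' : 1 ≤ L' := by linarith
        nlinarith [sq_nonneg (m*L)]
      linarith
    have hsplit : a/(2*L^2) - a'/(2*L'^2)
        = (a-a')/(2*L^2) + a'*(1/(2*L^2) - 1/(2*L'^2)) := by
      field_simp; ring
    rw [hsplit]; linarith
  have e2 : 2*a^2/L^3 ≤ (1/(m^2*L^2))/2 := by
    have haa : a^2 ≤ 1/m^2 := by
      have h := mul_le_mul ha2 ha2 ha0.le (by positivity)
      calc a^2 = a*a := sq a
      _ ≤ 1/m*(1/m) := h
      _ = 1/m^2 := by field_simp <;> ring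
    calc 2*a^2/L^3 ≤ 2*(1/m^2)/L^3 := by gcongr
    _ = 2/(m^2*L^3) := by field_simp <;> ring
    _ ≤ (1/(m^2*L^2))/2 := by
        have heq2 : (1/(m^2*L^2))/2 = 1/(2*(m^2*L^2)) := by field_simp
        rw [heq2, div_le_div_iff₀ (by positivity) (by positivity)]
        nlinarith [mul_le_mul_of_nonneg_left hL (mul_nonneg (sq_nonneg m) (sq_nonneg L))]
  have e3 : 2*a'^2/L'^3 ≤ (1/(m^2*L^2))/2 := by
    have haa : a'^2 ≤ 1/m^2 := by
      have h := mul_le_mul ha'2' ha'2' ha'0.le (by positivity)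
      calc a'^2 = a'*a' := sq a'
      _ ≤ 1/m*(1/m) := h
      _ = 1/m^2 := by field_simp <;> ring
    have hL'L2 : L^2 ≤ L'^2 := by nlinarith
    calc 2*a'^2/L'^3 ≤ 2*(1/m^2)/L'^3 := by gcongr
    _ = 2/(m^2*L'^3) := by field_simp <;> ring
    _ ≤ (1/(m^2*L'^2))/2 := by
        have hL4' : 4 ≤ L' := by linarith
        have heq2 : (1/(m^2*L'^2))/2 = 1/(2*(m^2*L'^2)) := by field_simp
        rw [heq2, div_le_div_iff₀ (by positivity) (by positivity)]
        nlinarith [mul_le_mul_of_nonneg_left hL4' (mul_nonneg (sq_nonneg m) (sq_nonneg L'))]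
    _ ≤ (1/(m^2*L^2))/2 := by
        have h1 : 1/(m^2*L'^2) ≤ 1/(m^2*L^2) :=
          one_div_le_one_div_of_le (by positivity) (by nlinarith)
        linarith
  -- combine into main estimate
  have hmain : a/(L*L') - 3*(1/(m^2*L^2)) ≤ Q - Q' := by
    have ht1' : 1/L - 1/L' = a/(L*L') := t1
    linarith [hQ, hQ', e1, e2, e3]
  -- compare error with main
  have hcomp : 3*(1/(m^2*L^2)) ≤ (1/((m+1)*L'^2))/2 := by
    have hL'a : L' ≤ L + 1/100 := by linarith
    have hL'sq : L'^2 ≤ (101/100)*L^2 := by nlinarith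
    have l1 : 3*(1/(m^2*L^2)) = 3/(m^2*L^2) := by ring
    have l2 : (1/((m+1)*L'^2))/2 = 1/(2*((m+1)*L'^2)) := by field_simp
    rw [l1, l2, div_le_div_iff₀ (by positivity) (by positivity)]
    have hmm : (606/100)*(m+1) ≤ m^2 := by
      nlinarith [mul_le_mul_of_nonneg_right hm (show (0:ℝ) ≤ m by linarith)]
    calc 3*(2*((m+1)*L'^2)) ≤ 3*(2*((m+1)*((101/100)*L^2))) := by gcongr
    _ = ((606/100)*(m+1))*L^2 := by ring
    _ ≤ m^2*L^2 := by
        apply mul_le_mul_of_nonneg_right hmm (sq_nonneg L)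
    _ = 1*(m^2*L^2) := by ring
  have heq : 1/(2*(m+1)*L'^2) = (1/((m+1)*L'^2))/2 := by
    field_simp
  rw [heq]
  linarith [hmain, t2, hcomp]

set_option maxHeartbeats 1000000 in
lemma deltaq_upper_abs (m L L' L'' Q Q' : ℝ)
    (hm : 100 ≤ m)
    (hL : 4 ≤ L) (hLle : L ≤ L') (hL'le : L' ≤ L'')
    (ha1 : 1/(m+1) ≤ L' - L) (ha2 : L' - L ≤ 1/m)
    (ha'1 : 1/(m+2) ≤ L'' - L') (ha'2 : L'' - L' ≤ 1/(m+1))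
    (hQ : Q ≤ 1/L - (L'-L)/(2*L^2) + 2*(L'-L)^2/L^3)
    (hQ' : 1/L' - (L''-L')/(2*L'^2) - 2*(L''-L')^2/L'^3 ≤ Q') :
    Q - Q' ≤ (101/100)/(m*L^2) := by
  set a := L' - L with hadef
  set a' := L'' - L' with ha'def
  have hL0 : (0:ℝ) < L := by linarith
  have hL'0 : (0:ℝ) < L' := by linarith
  have hm0 : (0:ℝ) < m := by linarith
  have hmne : m ≠ 0 := ne_of_gt hm0
  have hLne : L ≠ 0 := ne_of_gt hL0
  have hL'ne : L' ≠ 0 := ne_of_gt hL'0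
  have ha0 : 0 < a := lt_of_lt_of_le (by positivity) ha1
  have ha'0 : 0 < a' := lt_of_lt_of_le (by positivity) ha'1
  have ha'2' : a' ≤ 1/m := le_trans ha'2 (by
    rw [div_le_div_iff₀ (by linarith) hm0]; nlinarith)
  have t1 : 1/L - 1/L' = a/(L*L') := by
    rw [hadef]; field_simp
  -- E ≥ 0
  have hE : a'/(2*L'^2) ≤ a/(2*L^2) := by
    have haa' : a' ≤ a := le_trans ha'2 ha1
    gcongr
  -- main term upper
  have t2 : a/(L*L') ≤ 1/(m*L^2) := by
    rw [div_le_div_iff₀ (by positivity) (by positivity)]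
    have ham : a*m ≤ 1 := by
      rw [le_div_iff₀ hm0] at ha2
      linarith
    have hLL : L^2 ≤ L*L' := by nlinarith
    calc a*(m*L^2) = (a*m)*L^2 := by ring
    _ ≤ 1*L^2 := by apply mul_le_mul_of_nonneg_right ham (sq_nonneg L)
    _ ≤ 1*(L*L') := by nlinarith
  -- error terms (as in lower bound)
  have e2 : 2*a^2/L^3 ≤ (1/(m^2*L^2))/2 := by
    have haa : a^2 ≤ 1/m^2 := by
      have h := mul_le_mul ha2 ha2 ha0.le (by positivity)
      calc a^2 = a*a := sq a
      _ ≤ 1/m*(1/m) := h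
      _ = 1/m^2 := by field_simp <;> ring
    calc 2*a^2/L^3 ≤ 2*(1/m^2)/L^3 := by gcongr
    _ = 2/(m^2*L^3) := by field_simp <;> ring
    _ ≤ (1/(m^2*L^2))/2 := by
        have heq2 : (1/(m^2*L^2))/2 = 1/(2*(m^2*L^2)) := by field_simp
        rw [heq2, div_le_div_iff₀ (by positivity) (by positivity)]
        nlinarith [mul_le_mul_of_nonneg_left hL (mul_nonneg (sq_nonneg m) (sq_nonneg L))]
  have e3 : 2*a'^2/L'^3 ≤ (1/(m^2*L^2))/2 := by
    have haa : a'^2 ≤ 1/m^2 := by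
      have h := mul_le_mul ha'2' ha'2' ha'0.le (by positivity)
      calc a'^2 = a'*a' := sq a'
      _ ≤ 1/m*(1/m) := h
      _ = 1/m^2 := by field_simp <;> ring
    calc 2*a'^2/L'^3 ≤ 2*(1/m^2)/L'^3 := by gcongr
    _ = 2/(m^2*L'^3) := by field_simp <;> ring
    _ ≤ (1/(m^2*L'^2))/2 := by
        have hL4' : 4 ≤ L' := by linarith
        have heq2 : (1/(m^2*L'^2))/2 = 1/(2*(m^2*L'^2)) := by field_simp
        rw [heq2, div_le_div_iff₀ (by positivity) (by positivity)]
        nlinarith [mul_le_mul_of_nonneg_left hL4' (mul_nonneg (sq_nonneg m) (sq_nonneg L'))]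
    _ ≤ (1/(m^2*L^2))/2 := by
        have h1 : 1/(m^2*L'^2) ≤ 1/(m^2*L^2) :=
          one_div_le_one_div_of_le (by positivity)
            (by nlinarith [mul_le_mul hLle hLle hL0.le hL'0.le, sq_nonneg m])
        linarith
  -- compare error with main
  have hcomp : 1/(m^2*L^2) ≤ (1/(m*L^2))/100 := by
    have l2 : (1/(m*L^2))/100 = 1/(100*(m*L^2)) := by field_simp
    rw [l2]
    apply one_div_le_one_div_of_le (by positivity)
    nlinarith [mul_le_mul_of_nonneg_right hm (mul_nonneg hm0.le (sq_nonneg L))]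
  have hfin : (101/100)/(m*L^2) = 1/(m*L^2) + (1/(m*L^2))/100 := by
    field_simp; ring
  rw [hfin]
  linarith [hQ, hQ', t1, t2, hE, e2, e3, hcomp]

lemma deltaq_lower {M : ℕ} (h : 100 ≤ M) :
    1/(2*((M:ℝ)+1)*(Real.log ((M:ℝ)+1))^2) ≤ q M - q (M+1) := by
  have h2 : 100 ≤ M + 1 := by omega
  have hq1 := (q_near h).1
  have hq2 := (q_near h2).2
  have hcast : ((M+1:ℕ):ℝ) = (M:ℝ)+1 := by push_cast; ring
  rw [hcast] at hq2
  have hc2 : ((M:ℝ)+1)+1 = (M:ℝ)+2 := by ring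
  rw [hc2] at hq2
  have hM1 : (100:ℝ) ≤ M := by exact_mod_cast h
  have haB := a_bounds (show 1 ≤ M by omega)
  have ha'B := a_bounds (show 1 ≤ M+1 by omega)
  rw [hcast, hc2] at ha'B
  exact deltaq_lower_abs (M:ℝ) (Real.log M) (Real.log ((M:ℝ)+1)) (Real.log ((M:ℝ)+2))
    (q M) (q (M+1)) hM1 (log_ge_four h)
    (Real.log_le_log (by positivity) (by linarith))
    (Real.log_le_log (by positivity) (by linarith))
    haB.1 haB.2 ha'B.1 ha'B.2 hq1 hq2

lemma deltaq_upper {M : ℕ} (h : 100 ≤ M) :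
    q M - q (M+1) ≤ (101/100)/((M:ℝ)*(Real.log M)^2) := by
  have h2 : 100 ≤ M + 1 := by omega
  have hq1 := (q_near h).2
  have hq2 := (q_near h2).1
  have hcast : ((M+1:ℕ):ℝ) = (M:ℝ)+1 := by push_cast; ring
  rw [hcast] at hq2
  have hc2 : ((M:ℝ)+1)+1 = (M:ℝ)+2 := by ring
  rw [hc2] at hq2
  have hM1 : (100:ℝ) ≤ M := by exact_mod_cast h
  have haB := a_bounds (show 1 ≤ M by omega)
  have ha'B := a_bounds (show 1 ≤ M+1 by omega)
  rw [hcast, hc2] at ha'B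
  exact deltaq_upper_abs (M:ℝ) (Real.log M) (Real.log ((M:ℝ)+1)) (Real.log ((M:ℝ)+2))
    (q M) (q (M+1)) hM1 (log_ge_four h)
    (Real.log_le_log (by positivity) (by linarith))
    (Real.log_le_log (by positivity) (by linarith))
    haB.1 haB.2 ha'B.1 ha'B.2 hq1 hq2

/-- `c k` is the number of integers `M ≥ 2` for which the critical strip `S_M^k` exists. -/
noncomputable def numCriticalStrips (k : ℕ) : ℕ :=
  {M : ℕ | 2 ≤ M ∧
    q (M + 1) * k + ((M : ℝ) + 2) * Real.log 3 <
      q M * k - ((M : ℝ) + 1) * Real.log 3}.ncard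

set_option maxHeartbeats 2000000 in
/-- For all sufficiently large `k`, the number `c(k)` of critical strips of the `k`-th
derivative of the Riemann zeta function satisfies `√k/(3 log k) < c(k) < 2√k/log k`. -/
theorem numCriticalStrips_bounds :
    ∃ K : ℕ, ∀ k : ℕ, K ≤ k →
      Real.sqrt k / (3 * Real.log k) < (numCriticalStrips k : ℝ) ∧
      (numCriticalStrips k : ℝ) < 2 * Real.sqrt k / Real.log k := by
  use 3^400 + 4000^4
  intro k hk
  have hk3n : (3:ℕ)^400 ≤ k := le_trans (Nat.le_add_right _ _) hk
  have hk4n : (4000:ℕ)^4 ≤ k := le_trans (Nat.le_add_left _ _) hk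
  clear hk
  have hk1 : 1 ≤ k := le_trans (Nat.one_le_pow _ _ (by norm_num)) hk4n
  have hy400' : (400:ℝ) * Real.log 3 ≤ Real.log k := by
    have hk3r : ((3:ℝ))^400 ≤ (k:ℝ) := by exact_mod_cast hk3n
    have h1 : Real.log ((3:ℝ)^400) ≤ Real.log k := Real.log_le_log (by positivity) hk3r
    rw [Real.log_pow] at h1
    exact_mod_cast h1
  have hk4r : ((4000:ℝ))^4 ≤ (k:ℝ) := by exact_mod_cast hk4n
  clear hk3n hk4n
  set s := Real.sqrt (k:ℝ) with hsdef
  set y := Real.log (k:ℝ) with hydef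
  have hkr1 : (1:ℝ) ≤ (k:ℝ) := by exact_mod_cast hk1
  have hks : s^2 = (k:ℝ) := Real.sq_sqrt (by positivity)
  have hs0 : 0 < s := Real.sqrt_pos.mpr (by linarith)
  -- y ≥ 400
  have hy400 : 400 ≤ y := by nlinarith [log3_ge_one, hy400']
  have hy0 : 0 < y := by linarith
  -- s ≥ 1000 y
  have hsy : 1000*y ≤ s := by
    have hss : Real.sqrt s ^ 2 = s := Real.sq_sqrt (Real.sqrt_nonneg _)
    have hss0 : 0 < Real.sqrt s := Real.sqrt_pos.mpr hs0
    have hylog : y = 4 * Real.log (Real.sqrt s) := by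
      rw [hsdef, Real.log_sqrt (Real.sqrt_nonneg _), Real.log_sqrt (by positivity)]
      rw [hydef]; ring
    have hlb : Real.log (Real.sqrt s) ≤ Real.sqrt s :=
      le_trans (Real.log_le_sub_one_of_pos hss0) (by linarith)
    have h4000 : 4000 ≤ Real.sqrt s := by
      have h1 : Real.sqrt (((4000:ℝ)^2)^2) ≤ s := by
        apply Real.sqrt_le_sqrt; nlinarith
      rw [Real.sqrt_sq (by positivity)] at h1
      have h2 : Real.sqrt ((4000:ℝ)^2) ≤ Real.sqrt s := Real.sqrt_le_sqrt h1
      rwa [Real.sqrt_sq (by norm_num)] at h2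
    calc 1000*y = 4000 * Real.log (Real.sqrt s) := by rw [hylog]; ring
    _ ≤ 4000 * Real.sqrt s := by nlinarith
    _ ≤ Real.sqrt s * Real.sqrt s := by nlinarith
    _ = s := by nlinarith [hss]
  -- log y ≤ y/10
  have hlogy0 : 0 ≤ Real.log y := Real.log_nonneg (by linarith)
  have hlogy : Real.log y ≤ y/10 := by
    have hsy0 : 0 < Real.sqrt y := Real.sqrt_pos.mpr hy0
    have hsyy : Real.sqrt y ^ 2 = y := Real.sq_sqrt hy0.le
    have h1 : Real.log y = 2 * Real.log (Real.sqrt y) := by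
      rw [Real.log_sqrt hy0.le]; ring
    have h2 : Real.log (Real.sqrt y) ≤ Real.sqrt y :=
      le_trans (Real.log_le_sub_one_of_pos hsy0) (by linarith)
    have h20 : 20 ≤ Real.sqrt y := by
      have := Real.sqrt_le_sqrt (show (400:ℝ) ≤ y from hy400)
      rwa [show Real.sqrt 400 = 20 by
        rw [show (400:ℝ) = 20^2 by norm_num, Real.sqrt_sq (by norm_num)]] at this
    nlinarith
  have hlogs : Real.log s = y/2 := by
    rw [hsdef, Real.log_sqrt (by positivity), hydef]
  have hyne : y ≠ 0 := ne_of_gt hy0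
  have hsne : s ≠ 0 := ne_of_gt hs0
  -- the strip set
  set S : Set ℕ := {M : ℕ | 2 ≤ M ∧
    q (M + 1) * k + ((M : ℝ) + 2) * Real.log 3 <
      q M * k - ((M : ℝ) + 1) * Real.log 3} with hSdef
  -- upper containment
  have hup : ∀ M ∈ S, (M:ℝ) < 2*s/y - 2 := by
    intro M hM
    by_contra hge
    push_neg at hge
    have hsdy : 1000 ≤ s/y := by
      rw [le_div_iff₀ hy0]; linarith
    have h2sy : 2000 ≤ 2*s/y := by
      rw [le_div_iff₀ hy0]; nlinarith
    have hMr : (1998:ℝ) ≤ (M:ℝ) := by linarith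
    have hM100 : 100 ≤ M := by
      have : (100:ℝ) ≤ (M:ℝ) := by linarith
      exact_mod_cast this
    have hMpos : (0:ℝ) < M := by linarith
    have hcond : (2*(M:ℝ)+3)*Real.log 3 < (q M - q (M+1))*(k:ℝ) := by
      have h := hM.2
      have hexp : (q M - q (M+1))*(k:ℝ) = q M*(k:ℝ) - q (M+1)*(k:ℝ) := by ring
      rw [hexp]; linarith
    have hΔ := deltaq_upper hM100
    have hL4 : 4 ≤ Real.log M := log_ge_four hM100
    set L := Real.log (M:ℝ) with hLdef
    have hL0 : (0:ℝ) < L := by linarith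
    -- derive M L < 0.72 s
    have hchain : (2*(M:ℝ)+3) < (101/100)/((M:ℝ)*L^2)*(k:ℝ) := by
      have l1 : (2*(M:ℝ)+3)*1 ≤ (2*(M:ℝ)+3)*Real.log 3 := by
        apply mul_le_mul_of_nonneg_left log3_ge_one (by linarith)
      have l2 : (q M - q (M+1))*(k:ℝ) ≤ (101/100)/((M:ℝ)*L^2)*(k:ℝ) := by
        apply mul_le_mul_of_nonneg_right hΔ (by positivity)
      linarith
    have hprod : (2*(M:ℝ)+3)*((M:ℝ)*L^2) < (101/100)*(k:ℝ) := by
      have := mul_lt_mul_of_pos_right hchain (show (0:ℝ) < (M:ℝ)*L^2 by positivity)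
      have heq : (101/100)/((M:ℝ)*L^2)*(k:ℝ)*((M:ℝ)*L^2) = (101/100)*(k:ℝ) := by
        field_simp
      rw [heq] at this
      linarith
    have hML2 : ((M:ℝ)*L)^2 < (101/200)*s^2 := by nlinarith [hks]
    have hML : (M:ℝ)*L < (72/100)*s := by
      nlinarith [sq_nonneg ((M:ℝ)*L - (72/100)*s), mul_pos hMpos hL0, hs0]
    -- but M ≥ 2s/y - 2 forces M L ≥ 0.79 s
    have hMy : 2*s - 2*y ≤ (M:ℝ)*y := by
      have := mul_le_mul_of_nonneg_right hge hy0.le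
      have heq : (2*s/y - 2)*y = 2*s - 2*y := by field_simp
      rw [heq] at this
      linarith
    have hMsy : s/y ≤ (M:ℝ) := by
      have : s/y ≤ 2*s/y - 2 := by
        have h2 : 2*s/y = 2*(s/y) := by ring
        rw [h2]; linarith
      linarith
    have hlogM : y/2 - Real.log y ≤ L := by
      have h1 : Real.log (s/y) ≤ L := by
        apply Real.log_le_log (by positivity) hMsy
      rw [Real.log_div hsne hyne, hlogs] at h1
      linarith
    have hLlow : 2*y/5 ≤ L := by linarith
    have hfin : (2/5)*((M:ℝ)*y) ≤ (M:ℝ)*L := by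
      have := mul_le_mul_of_nonneg_left hLlow (le_of_lt hMpos)
      nlinarith
    nlinarith
  -- finiteness and upper cardinality bound
  have hsub : S ⊆ ↑(Finset.range (⌊2*s/y⌋₊ - 1)) := by
    intro M hM
    have h1 := hup M hM
    have h2 : ((M:ℕ)+2 : ℝ) ≤ 2*s/y := by push_cast; linarith
    have h3 : M + 2 ≤ ⌊2*s/y⌋₊ := Nat.le_floor (by exact_mod_cast h2)
    simp only [Finset.coe_range, Set.mem_Iio]
    omega
  have hfin : S.Finite := Set.Finite.subset (Finset.range _).finite_toSet hsub
  have hcardup : numCriticalStrips k ≤ ⌊2*s/y⌋₊ - 1 := by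
    have h1 : S.ncard ≤ (↑(Finset.range (⌊2*s/y⌋₊ - 1)) : Set ℕ).ncard :=
      Set.ncard_le_ncard hsub (Finset.range _).finite_toSet
    rwa [Set.ncard_coe_finset, Finset.card_range] at h1
  -- lower bound: the interval [100, m1]
  set m1 := ⌊s/(2*y)⌋₊ with hm1def
  have hsdy500 : (500:ℝ) ≤ s/(2*y) := by
    rw [le_div_iff₀ (by positivity)]; nlinarith
  have hm1low : s/(2*y) - 1 < (m1:ℝ) := by
    have := Nat.lt_floor_add_one (s/(2*y))
    linarith
  have hm1le : (m1:ℝ) ≤ s/(2*y) := Nat.floor_le (by positivity)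
  have hm1_100 : 100 ≤ m1 := by
    have : (100:ℝ) ≤ (m1:ℝ) := by linarith
    exact_mod_cast this
  have hlower : ↑(Finset.Icc 100 m1) ⊆ S := by
    intro M hMmem
    simp only [Finset.coe_Icc, Set.mem_Icc] at hMmem
    obtain ⟨hM100, hMm1⟩ := hMmem
    have hMr : (M:ℝ) ≤ (m1:ℝ) := by exact_mod_cast hMm1
    have hM100r : (100:ℝ) ≤ (M:ℝ) := by exact_mod_cast hM100
    constructor
    · omega
    -- the analytic condition
    have hΔ := deltaq_lower hM100
    set L' := Real.log ((M:ℝ)+1) with hL'def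
    have hL'4 : 4 ≤ L' := by
      have h := log_ge_four (show 100 ≤ M+1 by omega)
      have hc : ((M+1:ℕ):ℝ) = (M:ℝ)+1 := by push_cast; ring
      rwa [hc] at h
    have hL'0 : (0:ℝ) < L' := by linarith
    -- M+1 ≤ s hence L' ≤ y/2
    have hMs : (M:ℝ)+1 ≤ s := by
      have h1 : s/(2*y) ≤ s/800 := by
        apply div_le_div_of_nonneg_left hs0.le (by norm_num) (by linarith)
      have h2 : s/800 + 1 ≤ s := by
        rw [div_add' _ _ _ (by norm_num), div_le_iff₀ (by norm_num)]
        nlinarith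
      linarith
    have hL'y : L' ≤ y/2 := by
      have := Real.log_le_log (by positivity) hMs
      rw [hlogs] at this
      rw [hL'def]
      linarith
    -- key polynomial bound
    have key : (2*(M:ℝ)+3)*2*(2*((M:ℝ)+1)*L'^2) < s^2 := by
      have b1 : L'^2 ≤ y^2/4 := by nlinarith
      have b2 : (M:ℝ) + 1 ≤ s/(2*y) + 1 := by linarith
      have b3 : 2*(M:ℝ)+3 ≤ s/y + 3 := by
        have h1 : (M:ℝ) ≤ s/(2*y) := by linarith
        have h2 : 2*(s/(2*y)) = s/y := by field_simp
        nlinarith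
      have hy4 : (0:ℝ) ≤ y^2/4 := by positivity
      have step : (2*(M:ℝ)+3)*2*(2*((M:ℝ)+1)*L'^2)
          ≤ (s/y+3)*2*(2*(s/(2*y)+1)*(y^2/4)) := by
        gcongr
        all_goals first
          | exact b3
          | exact b2
          | exact b1
          | positivity
          | linarith
      have heq : (s/y+3)*2*(2*(s/(2*y)+1)*(y^2/4)) = (s+3*y)*(s+2*y)/2 := by
        field_simp; ring
      have hlt : (s+3*y)*(s+2*y)/2 < s^2 := by
        nlinarith [mul_le_mul_of_nonneg_right hsy hy0.le, mul_le_mul_of_nonneg_left hsy hs0.le]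
      calc (2*(M:ℝ)+3)*2*(2*((M:ℝ)+1)*L'^2) ≤ (s/y+3)*2*(2*(s/(2*y)+1)*(y^2/4)) := step
      _ = (s+3*y)*(s+2*y)/2 := heq
      _ < s^2 := hlt
    -- conclude the strip condition
    have hX0 : (0:ℝ) < 2*((M:ℝ)+1)*L'^2 := by positivity
    have hfrac : (2*(M:ℝ)+3)*2 < 1/(2*((M:ℝ)+1)*L'^2)*s^2 := by
      rw [div_mul_eq_mul_div, lt_div_iff₀ hX0]
      · nlinarith [key]
    have hlog3 : (2*(M:ℝ)+3)*Real.log 3 ≤ (2*(M:ℝ)+3)*2 := by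
      apply mul_le_mul_of_nonneg_left log3_le_two (by linarith)
    have hΔk : 1/(2*((M:ℝ)+1)*L'^2)*s^2 ≤ (q M - q (M+1))*(k:ℝ) := by
      rw [← hks]
      apply mul_le_mul_of_nonneg_right hΔ (sq_nonneg s)
    have hfin2 : (2*(M:ℝ)+3)*Real.log 3 < (q M - q (M+1))*(k:ℝ) := by linarith
    have hexp : (q M - q (M+1))*(k:ℝ) = q M*(k:ℝ) - q (M+1)*(k:ℝ) := by ring
    rw [hexp] at hfin2
    show q (M + 1) * k + ((M : ℝ) + 2) * Real.log 3 < q M * k - ((M : ℝ) + 1) * Real.log 3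
    linarith
  -- cardinality lower bound
  have hcardlow : m1 - 99 ≤ numCriticalStrips k := by
    have h1 : (↑(Finset.Icc 100 m1) : Set ℕ).ncard ≤ S.ncard :=
      Set.ncard_le_ncard hlower hfin
    rwa [Set.ncard_coe_finset, Nat.card_Icc] at h1
  -- final numeric conclusions
  have hcardlowr : (m1:ℝ) - 99 ≤ (numCriticalStrips k : ℝ) := by
    have h1 : ((m1 - 99 : ℕ):ℝ) ≤ (numCriticalStrips k : ℝ) := by exact_mod_cast hcardlow
    have h2 : ((m1 - 99 : ℕ):ℝ) = (m1:ℝ) - 99 := by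
      have : 99 ≤ m1 := by omega
      push_cast [this]; ring
    linarith [h2 ▸ h1]
  constructor
  · -- lower bound
    have hsplit : s/(2*y) = s/(3*y) + s/(6*y) := by field_simp; ring
    have h6 : (100:ℝ) < s/(6*y) := by
      rw [lt_div_iff₀ (by positivity)]; nlinarith
    have : s/(3*y) < (numCriticalStrips k : ℝ) := by linarith
    linarith
  · -- upper bound
    have hfl1 : 1 ≤ ⌊2*s/y⌋₊ := by
      apply Nat.le_floor
      have : (2000:ℝ) ≤ 2*s/y := by rw [le_div_iff₀ hy0]; nlinarith
      push_cast; linarith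
    have h1 : ((⌊2*s/y⌋₊ - 1 : ℕ):ℝ) = (⌊2*s/y⌋₊:ℝ) - 1 := by
      push_cast [hfl1]; ring
    have h2 : (⌊2*s/y⌋₊:ℝ) ≤ 2*s/y := Nat.floor_le (by positivity)
    have h3 : (numCriticalStrips k : ℝ) ≤ ((⌊2*s/y⌋₊ - 1 : ℕ):ℝ) := by
      exact_mod_cast hcardup
    calc (numCriticalStrips k : ℝ) ≤ (⌊2*s/y⌋₊:ℝ) - 1 := by rw [← h1]; exact h3
    _ ≤ 2*s/y - 1 := by linarith
    _ < 2*s/y := by linarith
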